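/- Let G be a subgroup of orientation-preserving circle homeomorphisms in which every non-trivial element has at most 2 fixed points, and suppose G preserves a Borel probability measure whose support contains more than 2 points. Then G is abelian and the rotation number homomorphism rot: G → ℝ/ℤ is injective. -/
import Mathlib

open MeasureTheory
open scoped ENNReal

instance : Fact ((0:ℝ) < 1) := ⟨one_pos⟩

abbrev S1 : Type := AddCircle (1:ℝ)

noncomputable instance : Group (S1 ≃ₜ S1) where
  mul f g := g.trans f
  one := Homeomorph.refl S1
  inv := Homeomorph.symm
  mul_assoc f g h := by ext x; rfl
  one_mul f := by ext x; rfl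
  mul_one f := by ext x; rfl
  inv_mul_cancel f := by ext x; exact f.symm_apply_apply x

/-- The positively oriented half-open arc `[x, y)` in the circle. -/
noncomputable def arc (x y : S1) : Set S1 :=
  (fun t : ℝ => x + (t : S1)) '' Set.Ico (0 : ℝ)
    ((AddCircle.equivIco 1 0 (y - x) : Set.Ico (0:ℝ) (0+1)) : ℝ)

/-- The topological support of a measure on the circle. -/
def mSupport (μ : Measure S1) : Set S1 :=
  {x | ∀ U : Set S1, IsOpen U → x ∈ U → μ U ≠ 0}

/-- The rotation number of `g` computed at the basepoint `x` with respect to `μ`. -/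
noncomputable def rotAt (μ : Measure S1) (x : S1) (g : S1 ≃ₜ S1) : S1 :=
  ((μ (arc x (g x))).toReal : S1)

/-- A circle homeomorphism is orientation-preserving if it admits a strictly
monotone lift commuting with integer translations. -/
def OrientationPreserving (g : S1 ≃ₜ S1) : Prop :=
  ∃ F : ℝ → ℝ, StrictMono F ∧ (∀ x : ℝ, F (x + 1) = F x + 1) ∧
    ∀ x : ℝ, g (x : S1) = ((F x : ℝ) : S1)

/-! ### The canonical representative `rr : S1 → [0,1)` -/

noncomputable def rr (z : S1) : ℝ :=
  ((AddCircle.equivIco 1 0 z : Set.Ico (0:ℝ) (0+1)) : ℝ)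

lemma rr_mem (z : S1) : rr z ∈ Set.Ico (0:ℝ) 1 := by
  have := (AddCircle.equivIco 1 0 z).2
  simpa [rr] using this

lemma rr_nonneg (z : S1) : 0 ≤ rr z := (rr_mem z).1
lemma rr_lt_one (z : S1) : rr z < 1 := (rr_mem z).2

lemma rr_real (t : ℝ) : rr (t : S1) = Int.fract t := by
  have := AddCircle.coe_equivIco_mk_apply (p := (1:ℝ)) t
  simpa [rr] using this

lemma coe_rr (z : S1) : ((rr z : ℝ) : S1) = z := by
  induction z using QuotientAddGroup.induction_on with
  | H t =>
    rw [rr_real]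
    have h : ((Int.fract t : ℝ) : S1) - ((t:ℝ):S1) = 0 := by
      rw [← AddCircle.coe_sub, AddCircle.coe_eq_zero_iff]
      refine ⟨-⌊t⌋, ?_⟩
      rw [Int.fract, zsmul_eq_mul]
      push_cast
      ring
    exact sub_eq_zero.mp h

lemma rr_zero : rr (0 : S1) = 0 := by
  have : ((0:ℝ) : S1) = 0 := by norm_num
  rw [← this, rr_real]
  simp

lemma rr_eq_zero_iff {z : S1} : rr z = 0 ↔ z = 0 := by
  constructor
  · intro h
    have := coe_rr z
    rw [h] at this
    simpa using this.symm
  · rintro rfl; exact rr_zero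

lemma rr_sub (p q : S1) : rr (p - q) = Int.fract (rr p - rr q) := by
  have h : p - q = ((rr p - rr q : ℝ) : S1) := by
    rw [AddCircle.coe_sub, coe_rr, coe_rr]
  rw [h, rr_real]

lemma fract_eq_of_mem {u : ℝ} (h0 : 0 ≤ u) (h1 : u < 1) : Int.fract u = u :=
  Int.fract_eq_self.2 ⟨h0, h1⟩

lemma fract_sub_cases {u β : ℝ} (hu0 : 0 ≤ u) (hu1 : u < 1) (hβ0 : 0 ≤ β) (hβ1 : β < 1) :
    Int.fract (u - β) = if β ≤ u then u - β else u - β + 1 := by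
  split_ifs with h
  · exact fract_eq_of_mem (by linarith) (by linarith)
  · push_neg at h
    have : Int.fract (u - β) = Int.fract (u - β + 1) := by
      rw [show (1:ℝ) = ((1:ℤ):ℝ) by norm_num, Int.fract_add_intCast]
    rw [this]
    exact fract_eq_of_mem (by linarith) (by linarith)

lemma mem_arc {a b z : S1} : z ∈ arc a b ↔ rr (z - a) < rr (b - a) := by
  constructor
  · rintro ⟨t, ⟨ht0, htlt⟩, rfl⟩
    have htlt' : t < rr (b - a) := htlt
    have ht1 : t < 1 := lt_of_lt_of_le htlt' (rr_lt_one (b - a)).le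
    have : a + (t : S1) - a = (t : S1) := by abel
    rw [this, rr_real, fract_eq_of_mem ht0 ht1]
    exact htlt'
  · intro h
    refine ⟨rr (z - a), ⟨rr_nonneg _, h⟩, ?_⟩
    show a + ((rr (z - a) : ℝ) : S1) = z
    rw [coe_rr]
    abel

lemma arc_eq_setOf (a b : S1) : arc a b = {z | rr (z - a) < rr (b - a)} :=
  Set.ext fun _ => mem_arc

lemma arc_self (a : S1) : arc a a = ∅ := by
  rw [arc_eq_setOf]
  ext z
  simp only [Set.mem_setOf_eq, Set.mem_empty_iff_false, iff_false, not_lt]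
  rw [sub_self, rr_zero]
  exact rr_nonneg _

lemma measurable_rr : Measurable rr := by
  have h := (AddCircle.measurableEquivIco (T := (1:ℝ)) 0).measurable
  exact measurable_subtype_coe.comp h

lemma measurableSet_arc (a b : S1) : MeasurableSet (arc a b) := by
  rw [arc_eq_setOf]
  have : Measurable fun z : S1 => rr (z - a) :=
    measurable_rr.comp (measurable_id.sub_const a)
  exact this measurableSet_Iio

lemma mem_arc_iff_between {a b z : S1} (h : rr (b - a) ≤ rr (c - a)) :
    True := trivial

lemma rr_zb (a b z : S1) :
    rr (z - b) = if rr (b - a) ≤ rr (z - a) then rr (z - a) - rr (b - a)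
      else rr (z - a) - rr (b - a) + 1 := by
  have h : z - b = (z - a) - (b - a) := by abel
  rw [h, rr_sub, fract_sub_cases (rr_nonneg _) (rr_lt_one _) (rr_nonneg _) (rr_lt_one _)]

lemma mem_arc_mid {a b c z : S1} (h : rr (b - a) ≤ rr (c - a)) :
    z ∈ arc b c ↔ rr (b - a) ≤ rr (z - a) ∧ rr (z - a) < rr (c - a) := by
  rw [mem_arc, rr_zb a b z, rr_zb a b c, if_pos h]
  obtain ⟨hz0, hz1⟩ := rr_mem (z - a)
  obtain ⟨hb0, hb1⟩ := rr_mem (b - a)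
  obtain ⟨hc0, hc1⟩ := rr_mem (c - a)
  split_ifs with h1
  · constructor
    · intro hlt; exact ⟨h1, by linarith⟩
    · rintro ⟨-, h2⟩; linarith
  · push_neg at h1
    constructor
    · intro hlt; exfalso; linarith
    · rintro ⟨h2, -⟩; exfalso; linarith

lemma arc_union {a b c : S1} (h : rr (b - a) ≤ rr (c - a)) :
    arc a c = arc a b ∪ arc b c := by
  ext z
  rw [Set.mem_union, mem_arc, mem_arc, mem_arc_mid h]
  constructor
  · intro hlt
    rcases lt_or_ge (rr (z - a)) (rr (b - a)) with h1 | h1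
    · exact Or.inl h1
    · exact Or.inr ⟨h1, hlt⟩
  · rintro (h1 | ⟨-, h2⟩)
    · exact lt_of_lt_of_le h1 h
    · exact h2

lemma arc_disjoint {a b c : S1} (h : rr (b - a) ≤ rr (c - a)) :
    Disjoint (arc a b) (arc b c) := by
  rw [Set.disjoint_left]
  intro z hz hz'
  rw [mem_arc] at hz
  rw [mem_arc_mid h] at hz'
  linarith [hz'.1]

lemma arc_compl {a b : S1} (hab : a ≠ b) : arc b a = (arc a b)ᶜ := by
  ext z
  rw [Set.mem_compl_iff, mem_arc, mem_arc]
  have hba : rr (b - a) ≠ 0 := fun h => hab (by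
    have := rr_eq_zero_iff.1 h
    have : b = a := by
      have h2 := sub_eq_zero.mp this
      exact h2
    exact this.symm ▸ rfl)
  obtain ⟨hb0, hb1⟩ := rr_mem (b - a)
  obtain ⟨hz0, hz1⟩ := rr_mem (z - a)
  have hb : rr (b - a) ∈ Set.Ico (0:ℝ) 1 := ⟨hb0, hb1⟩
  have hab' : rr (a - b) = 1 - rr (b - a) := by
    have h : a - b = (a - a) - (b - a) := by abel
    rw [h, sub_self, rr_sub, rr_zero, zero_sub, Int.fract_neg]
    · rw [fract_eq_of_mem hb.1 hb.2]
    · rw [fract_eq_of_mem hb.1 hb.2]; exact hba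
  rw [rr_zb a b z, hab']
  split_ifs with h1
  · constructor
    · intro; linarith
    · intro; linarith
  · push_neg at h1
    constructor
    · intro h2; exfalso; linarith
    · intro h2; exfalso; exact h2 h1

/-! ### Measure of arcs -/

noncomputable def nu (μ : Measure S1) (a b : S1) : ℝ := (μ (arc a b)).toReal

lemma nu_self (μ : Measure S1) (a : S1) : nu μ a a = 0 := by
  rw [nu, arc_self, measure_empty, ENNReal.toReal_zero]

lemma nu_add (μ : Measure S1) [IsProbabilityMeasure μ] {a b c : S1}
    (h : rr (b - a) ≤ rr (c - a)) : nu μ a c = nu μ a b + nu μ b c := by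
  rw [nu, nu, nu, arc_union h, measure_union (arc_disjoint h) (measurableSet_arc b c),
    ENNReal.toReal_add (measure_ne_top μ _) (measure_ne_top μ _)]

lemma nu_compl (μ : Measure S1) [IsProbabilityMeasure μ] {a b : S1} (hab : a ≠ b) :
    nu μ a b + nu μ b a = 1 := by
  rw [nu, nu, arc_compl hab, ← ENNReal.toReal_add (measure_ne_top μ _) (measure_ne_top μ _),
    measure_add_measure_compl (measurableSet_arc a b), measure_univ, ENNReal.toReal_one]

lemma nuS_add (μ : Measure S1) [IsProbabilityMeasure μ] (a b c : S1) :
    ((nu μ a b : ℝ) : S1) + ((nu μ b c : ℝ) : S1) = ((nu μ a c : ℝ) : S1) := by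
  rcases eq_or_ne b c with rfl | hbc
  · rw [nu_self, show (((0:ℝ)) : S1) = 0 by norm_num, add_zero]
  rcases le_or_gt (rr (b - a)) (rr (c - a)) with h | h
  · rw [nu_add μ h, AddCircle.coe_add]
  · have h1 : nu μ a b = nu μ a c + nu μ c b := nu_add μ h.le
    have h2 : nu μ c b + nu μ b c = 1 := nu_compl μ (Ne.symm hbc)
    have : nu μ a b + nu μ b c = nu μ a c + 1 := by rw [h1]; linarith
    calc ((nu μ a b : ℝ) : S1) + ((nu μ b c : ℝ) : S1)
        = ((nu μ a b + nu μ b c : ℝ) : S1) := (AddCircle.coe_add (p := (1:ℝ)) (nu μ a b) (nu μ b c)).symm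
      _ = ((nu μ a c + 1 : ℝ) : S1) := by rw [this]
      _ = ((nu μ a c : ℝ) : S1) := AddCircle.coe_add_period (p := (1:ℝ)) (nu μ a c)

/-! ### Equivariance of arcs -/

lemma rr_coe_sub_coe {s t : ℝ} (h1 : s ≤ t) (h2 : t < s + 1) :
    rr ((t : S1) - (s : S1)) = t - s := by
  rw [← AddCircle.coe_sub, rr_real, fract_eq_of_mem (by linarith) (by linarith)]

lemma image_arc {g : S1 ≃ₜ S1} (hg : OrientationPreserving g) (a b : S1) :
    ⇑g '' arc a b = arc (g a) (g b) := by
  obtain ⟨F, hF, hF1, hgF⟩ := hg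
  have key : ∀ z : S1, z ∈ arc a b ↔ g z ∈ arc (g a) (g b) := by
    intro z
    rw [mem_arc, mem_arc]
    set s := rr a with hs
    set u := rr (z - a) with hu
    set β := rr (b - a) with hβ
    have hzeq : z = ((s + u : ℝ) : S1) := by
      rw [AddCircle.coe_add, hs, hu, coe_rr, coe_rr]; abel
    have hbeq : b = ((s + β : ℝ) : S1) := by
      rw [AddCircle.coe_add, hs, hβ, coe_rr, coe_rr]; abel
    have haeq : a = ((s : ℝ) : S1) := (coe_rr a).symm
    obtain ⟨hu0, hu1⟩ := rr_mem (z - a)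
    obtain ⟨hβ0, hβ1⟩ := rr_mem (b - a)
    have hFmono : ∀ v : ℝ, 0 ≤ v → v < 1 → rr ((F (s + v) : S1) - (F s : S1)) = F (s + v) - F s := by
      intro v hv0 hv1
      apply rr_coe_sub_coe
      · exact (hF.le_iff_le).2 (by linarith)
      · have : F (s + v) < F (s + 1) := hF (by linarith)
        rw [hF1] at this
        linarith
    have hgz : rr (g z - g a) = F (s + u) - F s := by
      rw [hzeq, haeq, hgF, hgF]; exact hFmono u hu0 hu1
    have hgb : rr (g b - g a) = F (s + β) - F s := by
      rw [hbeq, haeq, hgF, hgF]; exact hFmono β hβ0 hβ1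
    rw [hgz, hgb, sub_lt_sub_iff_right, hF.lt_iff_lt, add_lt_add_iff_left]
  ext w
  constructor
  · rintro ⟨z, hz, rfl⟩
    exact (key z).1 hz
  · intro hw
    refine ⟨g.symm w, ?_, g.apply_symm_apply w⟩
    have := (key (g.symm w))
    rw [g.apply_symm_apply] at this
    exact this.2 hw

lemma rr_inj {a b : S1} (h : rr a = rr b) : a = b := by
  rw [← coe_rr a, ← coe_rr b, h]

lemma exists_open_subset_arc {a c y : S1} (h1 : 0 < rr (y - a)) (h2 : rr (y - a) < rr (c - a)) :
    ∃ U : Set S1, IsOpen U ∧ y ∈ U ∧ U ⊆ arc a c := by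
  refine ⟨{z | 0 < rr (z - a) ∧ rr (z - a) < rr (c - a)}, ?_, ⟨h1, h2⟩,
    fun z hz => mem_arc.2 hz.2⟩
  have hc1 := rr_lt_one (c - a)
  have ha := rr_mem a
  have heq : {z : S1 | 0 < rr (z - a) ∧ rr (z - a) < rr (c - a)} =
      (fun t : ℝ => (t : S1)) '' Set.Ioo (rr a) (rr a + rr (c - a)) := by
    ext z
    simp only [Set.mem_setOf_eq, Set.mem_image, Set.mem_Ioo]
    constructor
    · rintro ⟨hz1, hz2⟩
      refine ⟨rr a + rr (z - a), ⟨by linarith, by linarith⟩, ?_⟩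
      rw [AddCircle.coe_add, coe_rr, coe_rr]; abel
    · rintro ⟨t, ⟨ht1, ht2⟩, rfl⟩
      have hza : (t : S1) - a = ((t - rr a : ℝ) : S1) := by
        rw [AddCircle.coe_sub, coe_rr]
      rw [hza, rr_real, fract_eq_of_mem (by linarith) (by linarith)]
      exact ⟨by linarith, by linarith⟩
  rw [heq]
  exact QuotientAddGroup.isOpenMap_coe _ isOpen_Ioo

/-! ### Dynamics -/

lemma fix_of_nu_zero (μ : Measure S1) [IsProbabilityMeasure μ] {g : S1 ≃ₜ S1}
    (hgOP : OrientationPreserving g)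
    (hinvg : ∀ s : Set S1, μ (⇑g '' s) = μ s) {y : S1} (hy : y ∈ mSupport μ)
    (h0 : μ (arc y (g y)) = 0) : g y = y := by
  by_contra hne
  have hsymne : g.symm y ≠ y := by
    intro h
    apply hne
    conv_lhs => rw [← h]
    rw [g.apply_symm_apply]
  set w := g.symm y with hw
  have himg : ⇑g '' arc w y = arc y (g y) := by
    rw [image_arc hgOP, g.apply_symm_apply]
  have hw0 : μ (arc w y) = 0 := by rw [← hinvg (arc w y), himg, h0]
  rcases le_or_gt (rr (y - w)) (rr (g y - w)) with hcase | hcase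
  · have hsplit : arc w (g y) = arc w y ∪ arc y (g y) := arc_union hcase
    have hμ : μ (arc w (g y)) = 0 := by
      rw [hsplit]; exact measure_union_null hw0 h0
    have h1 : 0 < rr (y - w) := by
      rcases (rr_nonneg (y - w)).lt_or_eq with h | h
      · exact h
      · exfalso
        apply hsymne
        have h' := rr_eq_zero_iff.1 h.symm
        have : y = w := sub_eq_zero.mp h'
        exact this.symm
    have h2 : rr (y - w) < rr (g y - w) := by
      rcases hcase.lt_or_eq with h | h
      · exact h
      · exfalso
        have heq : y - w = g y - w := rr_inj h
        exact hne (sub_left_inj.mp heq).symm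
    obtain ⟨U, hU, hyU, hUsub⟩ := exists_open_subset_arc h1 h2
    exact hy U hU hyU (measure_mono_null hUsub hμ)
  · have hsplit : arc w y = arc w (g y) ∪ arc (g y) y := arc_union hcase.le
    have hgy0 : μ (arc (g y) y) = 0 :=
      measure_mono_null (hsplit ▸ Set.subset_union_right) hw0
    have hcomp : arc (g y) y = (arc y (g y))ᶜ := arc_compl (Ne.symm hne)
    have huniv := measure_add_measure_compl (μ := μ) (measurableSet_arc y (g y))
    rw [← hcomp, h0, hgy0, measure_univ] at huniv
    simp at huniv

lemma fix_of_nu_one (μ : Measure S1) [IsProbabilityMeasure μ] {g : S1 ≃ₜ S1}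
    (hgOP : OrientationPreserving g) (hgOP' : OrientationPreserving g.symm)
    (hinvg : ∀ s : Set S1, μ (⇑g '' s) = μ s)
    (hinvg' : ∀ s : Set S1, μ (⇑g.symm '' s) = μ s) {y : S1} (hy : y ∈ mSupport μ)
    (h1 : μ (arc y (g y)) = 1) : g y = y := by
  rcases eq_or_ne (g y) y with h | hne
  · exact h
  have hc : μ (arc (g y) y) = 0 := by
    rw [arc_compl (Ne.symm hne), measure_compl (measurableSet_arc y (g y)) (measure_ne_top μ _),
      measure_univ, h1, tsub_self]
  have h0 : μ (arc y (g.symm y)) = 0 := by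
    have : ⇑g '' arc y (g.symm y) = arc (g y) y := by
      rw [image_arc hgOP, g.apply_symm_apply]
    rw [← hinvg (arc y (g.symm y)), this, hc]
  have := fix_of_nu_zero μ hgOP' hinvg' hy h0
  calc g y = g (g.symm y) := by rw [this]
    _ = y := g.apply_symm_apply y

lemma rot_indep (μ : Measure S1) [IsProbabilityMeasure μ] {g : S1 ≃ₜ S1}
    (hgOP : OrientationPreserving g)
    (hinvg : ∀ s : Set S1, μ (⇑g '' s) = μ s) (x y : S1) :
    ((nu μ y (g y) : ℝ) : S1) = ((nu μ x (g x) : ℝ) : S1) := by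
  have e1 := nuS_add μ y x (g y)
  have e2 := nuS_add μ x (g x) (g y)
  have e3 : nu μ (g x) (g y) = nu μ x y := by
    rw [nu, nu, ← image_arc hgOP x y, hinvg]
  have e4 := nuS_add μ y x y
  have e5 : nu μ y y = 0 := nu_self μ y
  calc ((nu μ y (g y) : ℝ) : S1)
      = ↑(nu μ y x) + ↑(nu μ x (g y)) := e1.symm
    _ = ↑(nu μ y x) + (↑(nu μ x (g x)) + ↑(nu μ (g x) (g y))) := by rw [e2]
    _ = ↑(nu μ x (g x)) + (↑(nu μ y x) + ↑(nu μ x y)) := by rw [e3]; abel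
    _ = ↑(nu μ x (g x)) + ↑(nu μ y y) := by rw [e4]
    _ = ↑(nu μ x (g x)) := by rw [e5]; norm_num

theorem stmt_2 (μ : Measure S1) [IsProbabilityMeasure μ]
    (G : Subgroup (S1 ≃ₜ S1))
    (hOP : ∀ g ∈ G, OrientationPreserving g)
    (hinv : ∀ g ∈ G, ∀ s : Set S1, μ (⇑g '' s) = μ s)
    (hfix : ∀ g ∈ G, g ≠ 1 → {z : S1 | g z = z}.encard ≤ 2)
    (hsupp : 2 < (mSupport μ).encard)
    (x : S1) (hx : x ∈ mSupport μ) :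
    (∀ g ∈ G, ∀ h ∈ G, g * h = h * g) ∧
    (∀ g ∈ G, ∀ h ∈ G, rotAt μ x g = rotAt μ x h → g = h) := by
  have key : ∀ g ∈ G, rotAt μ x g = 0 → g = 1 := by
    intro g hg hrot
    have hgOP := hOP g hg
    have hinvg := hinv g hg
    have hgOP' : OrientationPreserving g.symm := hOP g⁻¹ (G.inv_mem hg)
    have hinvg' : ∀ s : Set S1, μ (⇑g.symm '' s) = μ s := hinv g⁻¹ (G.inv_mem hg)
    have hfixall : ∀ y ∈ mSupport μ, g y = y := by
      intro y hy
      have h1 : ((nu μ y (g y) : ℝ) : S1) = 0 := by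
        rw [rot_indep μ hgOP hinvg x y]
        exact hrot
      obtain ⟨n, hn⟩ := (AddCircle.coe_eq_zero_iff (1:ℝ)).1 h1
      have hn' : (n : ℝ) = nu μ y (g y) := by rw [← hn]; simp
      have h0 : (0:ℝ) ≤ nu μ y (g y) := ENNReal.toReal_nonneg
      have hle : nu μ y (g y) ≤ 1 := by
        rw [nu]
        have h := prob_le_one (μ := μ) (s := arc y (g y))
        calc (μ (arc y (g y))).toReal ≤ (1 : ℝ≥0∞).toReal :=
              ENNReal.toReal_mono (by norm_num) h
          _ = 1 := by norm_num
      have hn0 : (0:ℝ) ≤ (n:ℝ) := by rw [hn']; exact h0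
      have hn1 : (n:ℝ) ≤ 1 := by rw [hn']; exact hle
      have : n = 0 ∨ n = 1 := by
        have h0' : (0:ℤ) ≤ n := by exact_mod_cast hn0
        have h1' : n ≤ (1:ℤ) := by exact_mod_cast hn1
        omega
      rcases this with rfl | rfl
      · have hz : nu μ y (g y) = 0 := by rw [← hn']; norm_num
        have : μ (arc y (g y)) = 0 := by
          rw [nu] at hz
          rcases (ENNReal.toReal_eq_zero_iff _).1 hz with h | h
          · exact h
          · exact absurd h (measure_ne_top μ _)
        exact fix_of_nu_zero μ hgOP hinvg hy this
      · have hz : nu μ y (g y) = 1 := by rw [← hn']; norm_num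
        have : μ (arc y (g y)) = 1 := by
          rw [nu] at hz
          exact (ENNReal.toReal_eq_one_iff _).1 hz
        exact fix_of_nu_one μ hgOP hgOP' hinvg hinvg' hy this
    by_contra hne
    have hsub : mSupport μ ⊆ {z | g z = z} := fun y hy => hfixall y hy
    exact absurd (le_trans (Set.encard_mono hsub) (hfix g hg hne)) (not_le.2 hsupp)
  have hrot_add : ∀ g ∈ G, ∀ h ∈ G, rotAt μ x (g * h) = rotAt μ x g + rotAt μ x h := by
    intro g hg h hh
    have e1 := nuS_add μ x (h x) (g (h x))
    have e2 := rot_indep μ (hOP g hg) (hinv g hg) x (h x)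
    show ((nu μ x ((g * h) x) : ℝ) : S1) = ↑(nu μ x (g x)) + ↑(nu μ x (h x))
    have hgh : (g * h) x = g (h x) := rfl
    rw [hgh, ← e1, e2]
    abel
  have hrot1 : rotAt μ x 1 = 0 := by
    show ((nu μ x ((1 : S1 ≃ₜ S1) x) : ℝ) : S1) = 0
    have h1 : (1 : S1 ≃ₜ S1) x = x := rfl
    rw [h1, nu_self]
    norm_num
  have hinj : ∀ g ∈ G, ∀ h ∈ G, rotAt μ x g = rotAt μ x h → g = h := by
    intro g hg h hh hr
    have hk : g * h⁻¹ ∈ G := G.mul_mem hg (G.inv_mem hh)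
    have hz : rotAt μ x (g * h⁻¹) = 0 := by
      have e := hrot_add g hg h⁻¹ (G.inv_mem hh)
      have e2 := hrot_add h hh h⁻¹ (G.inv_mem hh)
      have h1 : (h * h⁻¹ : S1 ≃ₜ S1) = 1 := mul_inv_cancel h
      rw [h1, hrot1] at e2
      rw [e, hr, ← e2]
    have := key _ hk hz
    exact mul_inv_eq_one.1 this
  refine ⟨?_, hinj⟩
  intro g hg h hh
  apply hinj (g * h) (G.mul_mem hg hh) (h * g) (G.mul_mem hh hg)
  rw [hrot_add g hg h hh, hrot_add h hh g hg, add_comm]
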